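/- arXiv:1504.05225 — 5 statements merged into one kernel-verified Lean document; each statement's English description precedes it below -/
import Mathlib

section
/- The function h(y) = y − 1 + η(y)³/(8y³) is strictly increasing on (2, ∞), where η(y) is the distance from y to the nearest integer. -/
lemma eta_eq (x : ℝ) : min (x - ⌊x⌋) (⌈x⌉ - x) = |x - round x| := by
  rw [abs_sub_round_eq_min]
  have hf : Int.fract x = x - ⌊x⌋ := rfl
  rcases Int.fract_eq_zero_or_add_one_sub_ceil x with h | h
  · have hx : (⌊x⌋ : ℝ) = x := by rw [hf] at h; linarith
    have hc : (⌈x⌉ : ℝ) = x := by rw [← hx, Int.ceil_intCast]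
    rw [h, hx, hc]
    norm_num
  · rw [hf] at h ⊢
    congr 1
    linarith

set_option maxHeartbeats 1000000 in
lemma main_ineq (a b ea eb : ℝ) (ha : 2 < a) (hb : 2 < b) (hab : a < b)
    (hea0 : 0 ≤ ea) (heb0 : 0 ≤ eb) (hea : ea ≤ 1/2) (heb : eb ≤ 1/2)
    (lip : ea ≤ eb + (b - a)) :
    a - 1 + ea ^ 3 / (8 * a ^ 3) < b - 1 + eb ^ 3 / (8 * b ^ 3) := by
  have ha0 : (0:ℝ) < a := by linarith
  have hb0 : (0:ℝ) < b := by linarith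
  have ha3 : (0:ℝ) < 8 * a ^ 3 := by positivity
  have hb3 : (0:ℝ) < 8 * b ^ 3 := by positivity
  have h1 : ea ^ 3 - eb ^ 3 ≤ (3/4) * (b - a) := by
    rcases le_total ea eb with h | h
    · nlinarith [sq_nonneg (ea + eb), sq_nonneg (ea - eb)]
    · have e2 : ea^2 + ea*eb + eb^2 ≤ 3/4 := by nlinarith
      have e3 : ea - eb ≤ b - a := by linarith
      nlinarith [mul_nonneg (sub_nonneg.2 h) (by positivity : (0:ℝ) ≤ ea^2 + ea*eb + eb^2)]
  have key : ea ^ 3 / (8 * a ^ 3) - eb ^ 3 / (8 * b ^ 3) < b - a := by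
    rw [div_sub_div _ _ ha3.ne' hb3.ne', div_lt_iff₀ (by positivity)]
    have h4 : eb ^ 3 ≤ 1/8 := by
      calc eb ^ 3 ≤ (1/2) ^ 3 := pow_le_pow_left₀ heb0 heb 3
        _ = 1/8 := by norm_num
    have ha8 : 8 < a ^ 3 := by nlinarith [mul_pos (sub_pos.2 ha) (mul_pos ha0 ha0)]
    have hb8 : 8 < b ^ 3 := by nlinarith [mul_pos (sub_pos.2 hb) (mul_pos hb0 hb0)]
    have t2 : b ^ 3 - a ^ 3 ≤ 3 * b ^ 2 * (b - a) := by
      nlinarith [mul_nonneg (mul_nonneg (sq_nonneg (b - a)) hb0.le) ha0.le,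
        mul_nonneg (sq_nonneg (b - a)) ha0.le]
    have t3 : 0 ≤ b ^ 3 - a ^ 3 := by
      nlinarith [mul_nonneg (mul_nonneg (sub_nonneg.2 hab.le) ha0.le) hb0.le,
        mul_nonneg (sub_nonneg.2 hab.le) (sq_nonneg (a + b))]
    have t1 : ea ^ 3 * (8 * b ^ 3) - eb ^ 3 * (8 * b ^ 3) ≤ (3/4) * (b - a) * (8 * b ^ 3) := by
      nlinarith [mul_le_mul_of_nonneg_right h1 hb3.le]
    have t4 : eb ^ 3 * (8 * b ^ 3) - eb ^ 3 * (8 * a ^ 3) ≤ (b ^ 3 - a ^ 3) := by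
      nlinarith [mul_le_mul_of_nonneg_right h4 t3]
    have t5 : 3 * b ^ 2 * (b - a) ≤ (3/2) * b ^ 3 * (b - a) := by
      nlinarith [mul_nonneg (mul_nonneg (sub_nonneg.2 hab.le) (sq_nonneg b))
        (sub_nonneg.2 hb.le)]
    have t6 : 512 * b ^ 3 * (b - a) ≤ (b - a) * (8 * a ^ 3 * (8 * b ^ 3)) := by
      have hpos : 0 ≤ 64 * (b ^ 3 * (b - a)) * (a ^ 3 - 8) :=
        mul_nonneg (mul_nonneg (by norm_num)
          (mul_nonneg (pow_pos hb0 3).le (sub_nonneg.2 hab.le))) (by linarith)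
      have hring : (b - a) * (8 * a ^ 3 * (8 * b ^ 3)) =
          512 * b ^ 3 * (b - a) + 64 * (b ^ 3 * (b - a)) * (a ^ 3 - 8) := by ring
      linarith
    have hbb : 0 < b ^ 3 * (b - a) := mul_pos (pow_pos hb0 3) (sub_pos.2 hab)
    have h75 : (15/2) * (b ^ 3 * (b - a)) < 512 * (b ^ 3 * (b - a)) := by linarith
    linarith [t1, t2, t4, t5, t6, h75]
  linarith

theorem stmt_6 :
    StrictMonoOn
      (fun y : ℝ => y - 1 + (min (y - ⌊y⌋) (⌈y⌉ - y)) ^ 3 / (8 * y ^ 3))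
      (Set.Ioi (2 : ℝ)) := by
  intro a ha b hb hab
  simp only [Set.mem_Ioi] at ha hb
  simp only [eta_eq]
  have lip : |a - round a| ≤ |b - round b| + (b - a) := by
    have h1 : |a - round a| ≤ |a - round b| := round_le a (round b)
    have h2 : |a - round b| ≤ |a - b| + |b - round b| := by
      calc |a - round b| = |(a - b) + (b - round b)| := by ring_nf
        _ ≤ |a - b| + |b - round b| := abs_add_le _ _
    have h3 : |a - b| = b - a := by rw [abs_sub_comm]; exact abs_of_pos (by linarith)
    linarith
  exact main_ineq a b _ _ ha hb hab (abs_nonneg _) (abs_nonneg _)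
    (abs_sub_round a) (abs_sub_round b) lip
end

section
/- Let G be a finite connected graph with n vertices, average degree μ = (1/n)∑_v deg(v) ≥ 2 and minimum degree at least 2. Then the geometric-mean quantity Λ(G) = ∏_{v ∈ V(G)} (deg(v) − 1)^{deg(v)/(nμ)} satisfies Λ(G) ≥ μ − 1. -/
open Real Finset

lemma myConvex : ConvexOn ℝ (Set.Ici (2:ℝ)) (fun x => x * Real.log (x - 1)) := by
  have hint : interior (Set.Ici (2:ℝ)) = Set.Ioi 2 := interior_Ici
  apply convexOn_of_hasDerivWithinAt2_nonneg (f' := fun x => Real.log (x-1) + x * (x-1)⁻¹)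
    (f'' := fun x => (x-1)⁻¹ + ((x-1)⁻¹ + x * (-(1 / ((x-1)^2))))) (convex_Ici 2)
  · apply ContinuousOn.mul continuousOn_id
    apply ContinuousOn.log (by fun_prop)
    intro x hx
    have : (2:ℝ) ≤ x := hx
    nlinarith
  · rw [hint]
    intro x hx
    have hx2 : (2:ℝ) < x := hx
    have h1 : HasDerivAt (fun y : ℝ => y - 1) 1 x := (hasDerivAt_id x).sub_const 1
    have h2 : HasDerivAt (fun y => Real.log (y-1)) ((x-1)⁻¹ * 1) x :=
      (Real.hasDerivAt_log (by nlinarith)).comp x h1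
    have := (hasDerivAt_id x).mul h2
    simp only [mul_one, id] at this ⊢
    have h3 : HasDerivAt (fun y : ℝ => y * Real.log (y - 1))
        (Real.log (x-1) + x * (x-1)⁻¹) x := by
      exact this.congr_deriv (by ring)
    exact h3.hasDerivWithinAt
  · rw [hint]
    intro x hx
    have hx2 : (2:ℝ) < x := hx
    have hne : x - 1 ≠ 0 := by nlinarith
    have h1 : HasDerivAt (fun y : ℝ => y - 1) 1 x := (hasDerivAt_id x).sub_const 1
    have h2 : HasDerivAt (fun y => Real.log (y-1)) ((x-1)⁻¹ * 1) x :=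
      (Real.hasDerivAt_log (by nlinarith)).comp x h1
    have hinv : HasDerivAt (fun y : ℝ => (y-1)⁻¹) (-(1 / ((x-1)^2))) x := by
      have := h1.inv hne
      exact this.congr_deriv (by ring)
    have h4 := (hasDerivAt_id x).mul hinv
    simp only [id] at h4
    have h5 : HasDerivAt (fun y => Real.log (y-1) + y * (y-1)⁻¹)
        ((x-1)⁻¹ + ((x-1)⁻¹ + x * (-(1 / ((x-1)^2))))) x := by
      have := h2.add h4
      exact this.congr_deriv (by ring)
    exact h5.hasDerivWithinAt
  · rw [hint]
    intro x hx
    have hx2 : (2:ℝ) < x := hx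
    have hpos : (0:ℝ) < x - 1 := by linarith
    have key : (x-1)⁻¹ + ((x-1)⁻¹ + x * (-(1 / ((x-1)^2)))) = (x - 2) / (x-1)^2 := by
      field_simp
      ring
    rw [key]
    apply div_nonneg (by linarith) (by positivity)

theorem stmt_7 {V : Type*} [Fintype V] [Nonempty V] (G : SimpleGraph V)
    [DecidableRel G.Adj] (hconn : G.Connected) (hmin : ∀ v, 2 ≤ G.degree v)
    (μ : ℝ) (hμdef : μ = (∑ v, (G.degree v : ℝ)) / (Fintype.card V : ℝ))
    (hμ2 : 2 ≤ μ) :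
    μ - 1 ≤ ∏ v, ((G.degree v : ℝ) - 1) ^
      ((G.degree v : ℝ) / ((Fintype.card V : ℝ) * μ)) := by
  set n : ℝ := (Fintype.card V : ℝ) with hn
  have hnpos : (0 : ℝ) < n := by
    simp [hn]
    exact Fintype.card_pos
  have hμpos : (0:ℝ) < μ := by linarith
  have hd2 : ∀ v, (2:ℝ) ≤ (G.degree v : ℝ) := by
    intro v; exact_mod_cast hmin v
  have hd1 : ∀ v, (0:ℝ) < (G.degree v : ℝ) - 1 := by
    intro v; have := hd2 v; linarith
  -- Jensen
  have hJ := myConvex.map_sum_le (t := Finset.univ) (w := fun _ => 1 / n)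
    (p := fun v => (G.degree v : ℝ)) (fun i _ => by positivity)
    (by rw [Finset.sum_const, Finset.card_univ, nsmul_eq_mul]; field_simp; rfl) (fun i _ => hd2 i)
  have hsum : ∑ v, (1/n) • (G.degree v : ℝ) = μ := by
    simp only [smul_eq_mul, ← Finset.mul_sum]
    rw [hμdef]
    ring
  rw [hsum] at hJ
  simp only [smul_eq_mul] at hJ
  -- hJ : μ * log (μ - 1) ≤ ∑ v, (1/n) * ((degree v) * log ((degree v) - 1))
  have hkey : n * μ * Real.log (μ - 1) ≤ ∑ v, (G.degree v : ℝ) * Real.log ((G.degree v : ℝ) - 1) := by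
    have := mul_le_mul_of_nonneg_left hJ (le_of_lt hnpos)
    rw [Finset.mul_sum] at this
    calc n * μ * Real.log (μ - 1) = n * (μ * Real.log (μ - 1)) := by ring
    _ ≤ ∑ v, n * ((1/n) * ((G.degree v : ℝ) * Real.log ((G.degree v : ℝ) - 1))) := this
    _ = ∑ v, (G.degree v : ℝ) * Real.log ((G.degree v : ℝ) - 1) := by
        apply Finset.sum_congr rfl
        intro v _
        field_simp
  -- log of product
  have hprodpos : (0:ℝ) < ∏ v, ((G.degree v : ℝ) - 1) ^ ((G.degree v : ℝ) / (n * μ)) := by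
    apply Finset.prod_pos
    intro v _
    exact Real.rpow_pos_of_pos (hd1 v) _
  have hlogprod : Real.log (∏ v, ((G.degree v : ℝ) - 1) ^ ((G.degree v : ℝ) / (n * μ)))
      = ∑ v, ((G.degree v : ℝ) / (n * μ)) * Real.log ((G.degree v : ℝ) - 1) := by
    rw [Real.log_prod]
    · apply Finset.sum_congr rfl
      intro v _
      rw [Real.log_rpow (hd1 v)]
    · intro v _
      exact ne_of_gt (Real.rpow_pos_of_pos (hd1 v) _)
  have hnμ : (0:ℝ) < n * μ := by positivity
  have hloggoal : Real.log (μ - 1) ≤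
      Real.log (∏ v, ((G.degree v : ℝ) - 1) ^ ((G.degree v : ℝ) / (n * μ))) := by
    rw [hlogprod]
    have : ∑ v, ((G.degree v : ℝ) / (n * μ)) * Real.log ((G.degree v : ℝ) - 1)
        = (1 / (n * μ)) * ∑ v, (G.degree v : ℝ) * Real.log ((G.degree v : ℝ) - 1) := by
      rw [Finset.mul_sum]
      apply Finset.sum_congr rfl
      intro v _
      ring
    rw [this]
    have h := mul_le_mul_of_nonneg_left hkey (le_of_lt (by positivity : (0:ℝ) < 1/(n*μ)))
    calc Real.log (μ - 1) = (1/(n*μ)) * (n * μ * Real.log (μ - 1)) := by field_simp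
    _ ≤ (1/(n*μ)) * ∑ v, (G.degree v : ℝ) * Real.log ((G.degree v : ℝ) - 1) := h
  have hμ1 : (0:ℝ) < μ - 1 := by linarith
  exact (Real.log_le_log_iff hμ1 hprodpos).mp hloggoal
end

section
/- Let G be a finite connected graph with minimum degree at least 2 and average degree μ ≥ μ₀ ≥ 2, and let η = η(μ) be the distance from μ to the nearest integer. Then ln Λ(G) ≥ ln(μ−1) + η³/(8μ³), where Λ(G) = ∏_v (deg(v)−1)^{deg(v)/(nμ)} with n = |V(G)|. -/
noncomputable def gg (x : ℝ) : ℝ := x * Real.log (x - 1)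
noncomputable def gg1 (x : ℝ) : ℝ := Real.log (x - 1) + x / (x - 1)

lemma hasDerivAt_gg {x : ℝ} (hx : 1 < x) : HasDerivAt gg (gg1 x) x := by
  have h1 : x - 1 ≠ 0 := ne_of_gt (by linarith)
  have hlog : HasDerivAt (fun y : ℝ => Real.log (y - 1)) (1 / (x - 1)) x := by
    have := (Real.hasDerivAt_log h1).comp x ((hasDerivAt_id x).sub_const 1)
    simp at this
    rw [one_div]
    exact this
  have := (hasDerivAt_id x).mul hlog
  refine this.congr_deriv ?_
  unfold gg1
  field_simp
  rfl

lemma hasDerivAt_gg1 {x : ℝ} (hx : 1 < x) : HasDerivAt gg1 ((x - 2) / (x - 1) ^ 2) x := by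
  have h1 : x - 1 ≠ 0 := ne_of_gt (by linarith)
  have hlog : HasDerivAt (fun y : ℝ => Real.log (y - 1)) (1 / (x - 1)) x := by
    have := (Real.hasDerivAt_log h1).comp x ((hasDerivAt_id x).sub_const 1)
    simp at this
    rw [one_div]
    exact this
  have hdiv : HasDerivAt (fun y : ℝ => y / (y - 1)) ((1 * (x - 1) - x * 1) / (x - 1) ^ 2) x :=
    (hasDerivAt_id x).div ((hasDerivAt_id x).sub_const 1) h1
  have := hlog.add hdiv
  refine this.congr_deriv ?_
  field_simp
  ring

lemma mono_on_Icc {f f' : ℝ → ℝ} {a b : ℝ}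
    (hd : ∀ x ∈ Set.Icc a b, HasDerivAt f (f' x) x)
    (h0 : ∀ x ∈ Set.Ioo a b, 0 ≤ f' x) :
    MonotoneOn f (Set.Icc a b) := by
  apply monotoneOn_of_deriv_nonneg (convex_Icc a b)
  · exact fun x hx => (hd x hx).continuousAt.continuousWithinAt
  · intro x hx
    rw [interior_Icc] at hx
    exact (hd x (Set.mem_Icc_of_Ioo hx)).differentiableAt.differentiableWithinAt
  · intro x hx
    rw [interior_Icc] at hx
    rw [(hd x (Set.mem_Icc_of_Ioo hx)).deriv]
    exact h0 x hx

lemma anti_on_Icc {f f' : ℝ → ℝ} {a b : ℝ}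
    (hd : ∀ x ∈ Set.Icc a b, HasDerivAt f (f' x) x)
    (h0 : ∀ x ∈ Set.Ioo a b, f' x ≤ 0) :
    AntitoneOn f (Set.Icc a b) := by
  apply antitoneOn_of_deriv_nonpos (convex_Icc a b)
  · exact fun x hx => (hd x hx).continuousAt.continuousWithinAt
  · intro x hx
    rw [interior_Icc] at hx
    exact (hd x (Set.mem_Icc_of_Ioo hx)).differentiableAt.differentiableWithinAt
  · intro x hx
    rw [interior_Icc] at hx
    rw [(hd x (Set.mem_Icc_of_Ioo hx)).deriv]
    exact h0 x hx

-- g' is monotone on [2, ∞)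
lemma L1 {a b : ℝ} (ha : 2 ≤ a) (hab : a ≤ b) : gg1 a ≤ gg1 b := by
  have := mono_on_Icc (f := gg1) (f' := fun x => (x - 2) / (x - 1) ^ 2) (a := a) (b := b)
    (fun x hx => hasDerivAt_gg1 (by have := hx.1; linarith))
    (fun x hx => by
      have h1 : (0:ℝ) < x - 1 := by have := hx.1; linarith
      have h2 : (0:ℝ) ≤ x - 2 := by have := hx.1; linarith
      positivity)
  exact this (Set.left_mem_Icc.2 hab) (Set.right_mem_Icc.2 hab) hab

-- second-order bound on the left: for 2 ≤ x ≤ μ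
lemma L2 {μ x : ℝ} (hx : 2 ≤ x) (hxμ : x ≤ μ) :
    ((μ - 2) ^ 2 - (x - 2) ^ 2) / (2 * μ ^ 2) ≤ gg1 μ - gg1 x := by
  have hμ : (2:ℝ) ≤ μ := le_trans hx hxμ
  have hμ0 : (0:ℝ) < μ := by linarith
  have key := mono_on_Icc (f := fun t => gg1 t - (t - 2) ^ 2 / (2 * μ ^ 2))
    (f' := fun t => (t - 2) / (t - 1) ^ 2 - (2 * (t - 2)) / (2 * μ ^ 2)) (a := x) (b := μ)
    (fun t ht => by
      have h1 : (1:ℝ) < t := by have := ht.1; linarith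
      have : HasDerivAt (fun t : ℝ => (t - 2) ^ 2 / (2 * μ ^ 2))
          (2 * (t - 2) / (2 * μ ^ 2)) t := by
        have h := (((hasDerivAt_id t).sub_const 2).pow 2).div_const (2 * μ ^ 2)
        refine h.congr_deriv ?_
        simp only [id_eq]
        push_cast
        ring
      exact (hasDerivAt_gg1 h1).sub this)
    (fun t ht => by
      have h1 : (0:ℝ) < t - 1 := by have := ht.1; linarith
      have h2 : (0:ℝ) ≤ t - 2 := by have := ht.1; linarith
      have h3 : (t - 1) ^ 2 ≤ μ ^ 2 := by nlinarith [ht.2]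
      have h4 : (0:ℝ) < (t - 1) ^ 2 := by positivity
      rw [sub_nonneg]
      calc 2 * (t - 2) / (2 * μ ^ 2) = (t - 2) / μ ^ 2 := by ring
        _ ≤ (t - 2) / (t - 1) ^ 2 := by
            apply div_le_div_of_nonneg_left h2 h4 h3
        )
  have h5 := key (Set.left_mem_Icc.2 hxμ) (Set.right_mem_Icc.2 hxμ) hxμ
  simp only at h5
  rw [sub_div]
  linarith

-- left side: for 2 ≤ x ≤ μ : gg x ≥ gg μ + gg1 μ (x−μ) + (μ−x)³/(3μ²)
lemma L3 {μ x : ℝ} (hx : 2 ≤ x) (hxμ : x ≤ μ) :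
    gg μ + gg1 μ * (x - μ) + (μ - x) ^ 3 / (3 * μ ^ 2) ≤ gg x := by
  have hμ : (2:ℝ) ≤ μ := le_trans hx hxμ
  have hμ0 : (0:ℝ) < μ := by linarith
  set K : ℝ → ℝ := fun t => ((μ-2)^2*(μ-t) - ((μ-2)^3 - (t-2)^3)/3)/(2*μ^2) with hKdef
  have hKd : ∀ t : ℝ, HasDerivAt K (((t-2)^2 - (μ-2)^2)/(2*μ^2)) t := by
    intro t
    have h1 : HasDerivAt (fun t : ℝ => (t-2)^3) (3*(t-2)^2) t := by
      have := ((hasDerivAt_id t).sub_const 2).pow 3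
      refine this.congr_deriv ?_
      simp only [id_eq]
      push_cast
      ring
    have hA : HasDerivAt (fun t : ℝ => (μ-2)^2*(μ-t)) ((μ-2)^2 * (-1)) t :=
      ((hasDerivAt_id t).const_sub μ).const_mul ((μ-2)^2)
    have hB : HasDerivAt (fun t : ℝ => ((μ-2)^3 - (t-2)^3)/3) ((-(3*(t-2)^2))/3) t :=
      (h1.const_sub ((μ-2)^3)).div_const 3
    have := (hA.sub hB).div_const (2*μ^2)
    refine this.congr_deriv ?_
    ring
  have hT := anti_on_Icc (f := fun t => gg t - gg1 μ * t - K t)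
      (f' := fun t => gg1 t - gg1 μ - ((t-2)^2 - (μ-2)^2)/(2*μ^2)) (a := x) (b := μ)
    (fun t ht => by
      have h1 : (1:ℝ) < t := by have := ht.1; linarith
      exact ((hasDerivAt_gg h1).sub ((hasDerivAt_id t).const_mul (gg1 μ))).sub (hKd t) |>.congr_deriv (by ring))
    (fun t ht => by
      have h2 : (2:ℝ) ≤ t := by have := ht.1; linarith
      have := L2 h2 (le_of_lt ht.2)
      have heq : ((μ-2)^2 - (t-2)^2)/(2*μ^2) = -(((t-2)^2 - (μ-2)^2)/(2*μ^2)) := by ring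
      linarith [this, heq ▸ this])
  have h5 := hT (Set.left_mem_Icc.2 hxμ) (Set.right_mem_Icc.2 hxμ) hxμ
  simp only at h5
  have hKμ : K μ = 0 := by simp [hKdef]
  have hKx : (μ - x) ^ 3 / (3 * μ ^ 2) ≤ K x := by
    rw [hKdef]
    rw [div_le_div_iff₀ (by positivity) (by positivity)]
    nlinarith [mul_nonneg (mul_nonneg (sq_nonneg μ) (sq_nonneg (μ - x))) (by linarith : (0:ℝ) ≤ x - 2)]
  nlinarith [h5, hKx, hKμ]

-- right side second order: for μ ≤ x ≤ μ + 1/2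
lemma L4 {μ x : ℝ} (hμ : 2 ≤ μ) (hμx : μ ≤ x) (hxb : x ≤ μ + 1/2) :
    (x - μ) ^ 2 / (2 * μ ^ 2) ≤ gg1 x - gg1 μ := by
  have hμ0 : (0:ℝ) < μ := by linarith
  have key := mono_on_Icc (f := fun t => gg1 t - (t - μ) ^ 2 / (2 * μ ^ 2))
    (f' := fun t => (t - 2) / (t - 1) ^ 2 - (2 * (t - μ)) / (2 * μ ^ 2)) (a := μ) (b := x)
    (fun t ht => by
      have h1 : (1:ℝ) < t := by have := ht.1; linarith
      have h : HasDerivAt (fun t : ℝ => (t - μ) ^ 2 / (2 * μ ^ 2))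
          (2 * (t - μ) / (2 * μ ^ 2)) t := by
        have h := (((hasDerivAt_id t).sub_const μ).pow 2).div_const (2 * μ ^ 2)
        refine h.congr_deriv ?_
        simp only [id_eq]
        push_cast
        ring
      exact (hasDerivAt_gg1 h1).sub h)
    (fun t ht => by
      have h1 : (0:ℝ) < t - 1 := by have := ht.1; linarith
      have h2 : (0:ℝ) ≤ t - μ := by have := ht.1; linarith
      have h3 : (t - 1) ^ 2 ≤ μ ^ 2 := by nlinarith [ht.2, hxb]
      have h4 : (0:ℝ) < (t - 1) ^ 2 := by positivity
      rw [sub_nonneg]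
      calc 2 * (t - μ) / (2 * μ ^ 2) = (t - μ) / μ ^ 2 := by ring
        _ ≤ (t - μ) / (t - 1) ^ 2 := div_le_div_of_nonneg_left h2 h4 h3
        _ ≤ (t - 2) / (t - 1) ^ 2 := by gcongr
        )
  have h5 := key (Set.left_mem_Icc.2 hμx) (Set.right_mem_Icc.2 hμx) hμx
  simp only at h5
  have hz : (μ - μ) ^ 2 / (2 * μ ^ 2) = 0 := by simp
  linarith

-- right side value bound: for μ ≤ x ≤ μ + 1/2
lemma L5 {μ x : ℝ} (hμ : 2 ≤ μ) (hμx : μ ≤ x) (hxb : x ≤ μ + 1/2) :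
    gg μ + gg1 μ * (x - μ) + (x - μ) ^ 3 / (6 * μ ^ 2) ≤ gg x := by
  have hμ0 : (0:ℝ) < μ := by linarith
  have key := mono_on_Icc (f := fun t => gg t - gg1 μ * t - (t - μ) ^ 3 / (6 * μ ^ 2))
    (f' := fun t => gg1 t - gg1 μ - (3 * (t - μ) ^ 2) / (6 * μ ^ 2)) (a := μ) (b := x)
    (fun t ht => by
      have h1 : (1:ℝ) < t := by have := ht.1; linarith
      have h : HasDerivAt (fun t : ℝ => (t - μ) ^ 3 / (6 * μ ^ 2))
          (3 * (t - μ) ^ 2 / (6 * μ ^ 2)) t := by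
        have h := (((hasDerivAt_id t).sub_const μ).pow 3).div_const (6 * μ ^ 2)
        refine h.congr_deriv ?_
        simp only [id_eq]
        push_cast
        ring
      exact ((hasDerivAt_gg h1).sub ((hasDerivAt_id t).const_mul (gg1 μ))).sub h
        |>.congr_deriv (by ring))
    (fun t ht => by
      have h2 := L4 hμ (le_of_lt ht.1) (by linarith [ht.2])
      have heq : 3 * (t - μ) ^ 2 / (6 * μ ^ 2) = (t - μ) ^ 2 / (2 * μ ^ 2) := by ring
      rw [sub_nonneg, heq]
      linarith)
  have h5 := key (Set.left_mem_Icc.2 hμx) (Set.right_mem_Icc.2 hμx) hμx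
  simp only at h5
  have hz : (μ - μ) ^ 3 / (6 * μ ^ 2) = 0 := by simp
  linarith

-- tangent line bound for x ≥ c ≥ 2
lemma L6 {c x : ℝ} (hc : 2 ≤ c) (hcx : c ≤ x) :
    gg c + gg1 c * (x - c) ≤ gg x := by
  have key := mono_on_Icc (f := fun t => gg t - gg1 c * t)
    (f' := fun t => gg1 t - gg1 c) (a := c) (b := x)
    (fun t ht => by
      have h1 : (1:ℝ) < t := by have := ht.1; linarith
      exact (hasDerivAt_gg h1).sub ((hasDerivAt_id t).const_mul (gg1 c))
        |>.congr_deriv (by ring))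
    (fun t ht => by
      have := L1 hc (le_of_lt ht.1)
      linarith)
  have h5 := key (Set.left_mem_Icc.2 hcx) (Set.right_mem_Icc.2 hcx) hcx
  simp only at h5
  linarith

-- key pointwise estimate
lemma keyPointwise {μ x δ : ℝ} (hμ : 2 ≤ μ) (hδ0 : 0 ≤ δ) (hδ : δ ≤ 1/2)
    (hx : 2 ≤ x) (hcase : x ≤ μ - δ ∨ μ + δ ≤ x) :
    gg μ + gg1 μ * (x - μ) + δ ^ 3 / (6 * μ ^ 2) ≤ gg x := by
  have hμ0 : (0:ℝ) < μ := by linarith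
  rcases hcase with h | h
  · have hxμ : x ≤ μ := by linarith
    have := L3 hx hxμ
    have hcube : δ ^ 3 ≤ (μ - x) ^ 3 := by
      apply pow_le_pow_left₀ hδ0 (by linarith)
    have h2 : δ ^ 3 / (6 * μ ^ 2) ≤ (μ - x) ^ 3 / (3 * μ ^ 2) :=
      div_le_div₀ (pow_nonneg (by linarith) 3) hcube (by positivity) (by nlinarith)
    linarith
  · -- right side
    have hc2 : (2:ℝ) ≤ μ + δ := by linarith
    have h1 := L5 hμ (by linarith : μ ≤ μ + δ) (by linarith)
    have h2 := L6 hc2 h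
    have h3 := L1 hμ (by linarith : μ ≤ μ + δ)
    have h4 : gg1 μ * (x - (μ + δ)) ≤ gg1 (μ + δ) * (x - (μ + δ)) := by
      apply mul_le_mul_of_nonneg_right h3 (by linarith)
    have h5 : (μ + δ - μ) ^ 3 / (6 * μ ^ 2) = δ ^ 3 / (6 * μ ^ 2) := by ring_nf
    nlinarith [h1, h2, h4]

theorem stmt_8 {V : Type*} [Fintype V] [Nonempty V] (G : SimpleGraph V)
    [DecidableRel G.Adj] (hconn : G.Connected) (hmin : ∀ v, 2 ≤ G.degree v)
    (μ μ₀ : ℝ) (hμdef : μ = (∑ v, (G.degree v : ℝ)) / (Fintype.card V : ℝ))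
    (hμ₀ : 2 ≤ μ₀) (hμμ₀ : μ₀ ≤ μ) :
    Real.log (∏ v, ((G.degree v : ℝ) - 1) ^
        ((G.degree v : ℝ) / ((Fintype.card V : ℝ) * μ))) ≥
      Real.log (μ - 1) + (min (μ - ⌊μ⌋) (⌈μ⌉ - μ)) ^ 3 / (8 * μ ^ 3) := by
  classical
  have hn0 : (0:ℝ) < (Fintype.card V : ℝ) := by
    exact_mod_cast Fintype.card_pos
  have hμ2 : (2:ℝ) ≤ μ := le_trans hμ₀ hμμ₀
  have hμ0 : (0:ℝ) < μ := by linarith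
  set n : ℝ := (Fintype.card V : ℝ) with hndef
  set δ : ℝ := min (μ - ⌊μ⌋) (⌈μ⌉ - μ) with hδdef
  have hδ0 : 0 ≤ δ := le_min (by linarith [Int.floor_le μ]) (by linarith [Int.le_ceil μ])
  have hδhalf : δ ≤ 1/2 := by
    have h1 : ((⌈μ⌉:ℤ):ℝ) ≤ ((⌊μ⌋:ℤ):ℝ) + 1 := by
      exact_mod_cast Int.ceil_le_floor_add_one μ
    have h2 : δ ≤ μ - ⌊μ⌋ := min_le_left _ _
    have h3 : δ ≤ ⌈μ⌉ - μ := min_le_right _ _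
    linarith
  have hsum : (∑ v, (G.degree v : ℝ)) = n * μ := by
    rw [hμdef]
    field_simp
  -- pointwise bound
  have hpt : ∀ v, gg μ + gg1 μ * ((G.degree v : ℝ) - μ) + δ ^ 3 / (6 * μ ^ 2)
      ≤ gg (G.degree v : ℝ) := by
    intro v
    have hd2 : (2:ℝ) ≤ (G.degree v : ℝ) := by exact_mod_cast hmin v
    apply keyPointwise hμ2 hδ0 hδhalf hd2
    by_cases hc : (G.degree v : ℝ) ≤ μ
    · left
      have hfl : ((G.degree v : ℕ) : ℤ) ≤ ⌊μ⌋ := Int.le_floor.mpr (by exact_mod_cast hc)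
      have hfl' : ((G.degree v : ℕ) : ℝ) ≤ ((⌊μ⌋ : ℤ) : ℝ) := by exact_mod_cast hfl
      have h2 : δ ≤ μ - ⌊μ⌋ := min_le_left _ _
      linarith
    · right
      push_neg at hc
      have hcl : ⌈μ⌉ ≤ ((G.degree v : ℕ) : ℤ) := Int.ceil_le.mpr (by exact_mod_cast hc.le)
      have hcl' : ((⌈μ⌉ : ℤ) : ℝ) ≤ ((G.degree v : ℕ) : ℝ) := by exact_mod_cast hcl
      have h2 : δ ≤ ⌈μ⌉ - μ := min_le_right _ _
      linarith
  -- sum of pointwise bounds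
  have hsumineq : n * gg μ + n * (δ ^ 3 / (6 * μ ^ 2)) ≤ ∑ v, gg (G.degree v : ℝ) := by
    have h := Finset.sum_le_sum (fun v (_ : v ∈ Finset.univ) => hpt v)
    have heq : ∑ v : V, (gg μ + gg1 μ * ((G.degree v : ℝ) - μ) + δ ^ 3 / (6 * μ ^ 2))
        = n * gg μ + gg1 μ * ((∑ v, (G.degree v : ℝ)) - n * μ) + n * (δ ^ 3 / (6 * μ ^ 2)) := by
      rw [Finset.sum_add_distrib, Finset.sum_add_distrib, Finset.sum_const, Finset.sum_const,
        ← Finset.mul_sum, Finset.sum_sub_distrib, Finset.sum_const]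
      simp [Finset.card_univ, hndef]
    rw [heq, hsum] at h
    simpa using h
  -- rewrite the log of the product
  have hlog : Real.log (∏ v, ((G.degree v : ℝ) - 1) ^
      ((G.degree v : ℝ) / (n * μ))) = (∑ v, gg (G.degree v : ℝ)) / (n * μ) := by
    rw [Real.log_prod]
    · rw [Finset.sum_div]
      apply Finset.sum_congr rfl
      intro v _
      have hd2 : (2:ℝ) ≤ (G.degree v : ℝ) := by exact_mod_cast hmin v
      have hpos : (0:ℝ) < (G.degree v : ℝ) - 1 := by linarith
      rw [Real.log_rpow hpos, gg]
      ring
    · intro v _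
      have hd2 : (2:ℝ) ≤ (G.degree v : ℝ) := by exact_mod_cast hmin v
      have hpos : (0:ℝ) < (G.degree v : ℝ) - 1 := by linarith
      exact ne_of_gt (Real.rpow_pos_of_pos hpos _)
  rw [ge_iff_le, hlog]
  have hnμ : (0:ℝ) < n * μ := by positivity
  have hstep : Real.log (μ - 1) + δ ^ 3 / (6 * μ ^ 3)
      ≤ (∑ v, gg (G.degree v : ℝ)) / (n * μ) := by
    rw [le_div_iff₀ hnμ]
    have hggμ : gg μ = μ * Real.log (μ - 1) := rfl
    have hexp : (Real.log (μ - 1) + δ ^ 3 / (6 * μ ^ 3)) * (n * μ)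
        = n * gg μ + n * (δ ^ 3 / (6 * μ ^ 2)) := by
      rw [hggμ]
      field_simp
    rw [hexp]
    exact hsumineq
  have hfinal : δ ^ 3 / (8 * μ ^ 3) ≤ δ ^ 3 / (6 * μ ^ 3) := by
    apply div_le_div_of_nonneg_left (by positivity) (by positivity) (by nlinarith)
  linarith
end

section
/- Let (a_r)_{r≥1} be any sequence of positive integers. Then there exists a nondecreasing unbounded sequence (t_k) of positive integers such that t_{a_k} ≤ √k for each k ≥ 1 and lim_{n→∞} t_{n+1}/∑_{i=1}^n t_i = 0. -/
open Filter

theorem stmt_15 (a : ℕ → ℕ) (ha : ∀ r, 1 ≤ r → 0 < a r) :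
    ∃ t : ℕ → ℕ,
      (∀ k l, k ≤ l → t k ≤ t l) ∧
      Tendsto (fun k => t k) atTop atTop ∧
      (∀ k, 0 < t k) ∧
      (∀ k, 1 ≤ k → (t (a k) : ℝ) ≤ Real.sqrt k) ∧
      Tendsto (fun n => (t (n + 1) : ℝ) / ∑ i ∈ Finset.Icc 1 n, (t i : ℝ))
        atTop (nhds 0) := by
  classical
  set S : ℕ → Set ℕ := fun n => {k | 1 ≤ k ∧ n ≤ a k} with hSdef
  set t : ℕ → ℕ := fun n =>
    if (S n).Nonempty then max 1 (min n (Nat.sqrt (sInf (S n)))) else max 1 n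
    with htdef
  -- positivity
  have hpos : ∀ k, 0 < t k := by
    intro k
    simp only [htdef]
    split <;> exact lt_of_lt_of_le one_pos (le_max_left _ _)
  -- antitone sets
  have hSanti : ∀ k l, k ≤ l → S l ⊆ S k := by
    intro k l hkl x hx
    exact ⟨hx.1, le_trans hkl hx.2⟩
  -- monotone
  have hmono : ∀ k l, k ≤ l → t k ≤ t l := by
    intro k l hkl
    simp only [htdef]
    by_cases hl : (S l).Nonempty
    · have hk : (S k).Nonempty := hl.mono (hSanti k l hkl)
      rw [if_pos hl, if_pos hk]
      have h1 : sInf (S k) ≤ sInf (S l) :=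
        Nat.sInf_le (hSanti k l hkl (Nat.sInf_mem hl))
      exact max_le_max le_rfl (min_le_min hkl (Nat.sqrt_le_sqrt h1))
    · rw [if_neg hl]
      by_cases hk : (S k).Nonempty
      · rw [if_pos hk]
        exact max_le_max le_rfl (le_trans (min_le_left _ _) hkl)
      · rw [if_neg hk]
        exact max_le_max le_rfl hkl
  -- upper bound t n ≤ max 1 n
  have hub : ∀ n, t n ≤ max 1 n := by
    intro n
    simp only [htdef]
    split
    · exact max_le_max le_rfl (min_le_left _ _)
    · exact le_rfl
  -- unboundedness: ∀ K, ∃ N, ∀ n ≥ N, K ≤ t n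
  have hunb : ∀ K : ℕ, ∃ N, ∀ n ≥ N, K ≤ t n := by
    intro K
    refine ⟨max K (1 + (Finset.Icc 1 (K * K)).sup a), ?_⟩
    intro n hn
    have hnK : K ≤ n := le_trans (le_max_left _ _) hn
    have hna : 1 + (Finset.Icc 1 (K * K)).sup a ≤ n := le_trans (le_max_right _ _) hn
    simp only [htdef]
    by_cases hne : (S n).Nonempty
    · rw [if_pos hne]
      have hmem := Nat.sInf_mem hne
      have hgt : K * K < sInf (S n) := by
        by_contra hcon
        push_neg at hcon
        have hsup : a (sInf (S n)) ≤ (Finset.Icc 1 (K * K)).sup a :=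
          Finset.le_sup (Finset.mem_Icc.2 ⟨hmem.1, hcon⟩)
        have hm2 : n ≤ a (sInf (S n)) := hmem.2
        omega
      have : K ≤ Nat.sqrt (sInf (S n)) := Nat.le_sqrt.2 (le_of_lt hgt)
      exact le_trans (le_min hnK this) (le_max_right _ _)
    · rw [if_neg hne]
      exact le_trans hnK (le_max_right _ _)
  have htend : Tendsto (fun k => t k) atTop atTop := by
    apply tendsto_atTop_atTop.2
    intro K
    obtain ⟨N, hN⟩ := hunb K
    exact ⟨N, hN⟩
  -- sqrt bound
  have hsqrt : ∀ k, 1 ≤ k → (t (a k) : ℝ) ≤ Real.sqrt k := by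
    intro k hk
    have hak : 1 ≤ a k := ha k hk
    have hkmem : k ∈ S (a k) := ⟨hk, le_rfl⟩
    have hne : (S (a k)).Nonempty := ⟨k, hkmem⟩
    have h1 : t (a k) ≤ Nat.sqrt k := by
      simp only [htdef]
      rw [if_pos hne]
      have h2 : Nat.sqrt (sInf (S (a k))) ≤ Nat.sqrt k :=
        Nat.sqrt_le_sqrt (Nat.sInf_le hkmem)
      have h3 : 1 ≤ Nat.sqrt k := by
        rw [Nat.le_sqrt]; simpa using hk
      exact max_le h3 (le_trans (min_le_right _ _) h2)
    calc (t (a k) : ℝ) ≤ (Nat.sqrt k : ℝ) := by exact_mod_cast h1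
      _ ≤ Real.sqrt k := Real.nat_sqrt_le_real_sqrt
  refine ⟨t, hmono, htend, hpos, hsqrt, ?_⟩
  -- final limit
  rw [Metric.tendsto_atTop]
  intro ε hε
  obtain ⟨K, hK⟩ := exists_nat_gt (2 / ε)
  obtain ⟨N₀', hN₀⟩ := hunb K
  set N₀ := max 1 N₀' with hN₀def
  have hN₀1 : 1 ≤ N₀ := le_max_left _ _
  have hKpos : (0:ℝ) < K := lt_trans (by positivity) hK
  refine ⟨2 * N₀, ?_⟩
  intro n hn
  have hnN₀ : N₀ ≤ n := by omega
  -- sum lower bound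
  have hsub : Finset.Icc N₀ n ⊆ Finset.Icc 1 n := by
    intro x hx
    rw [Finset.mem_Icc] at *
    omega
  have hsum1 : ∑ i ∈ Finset.Icc N₀ n, (t i : ℝ) ≤ ∑ i ∈ Finset.Icc 1 n, (t i : ℝ) :=
    Finset.sum_le_sum_of_subset_of_nonneg hsub (fun i _ _ => by positivity)
  have hsum2 : ((n + 1 - N₀ : ℕ) : ℝ) * K ≤ ∑ i ∈ Finset.Icc N₀ n, (t i : ℝ) := by
    have : ∀ i ∈ Finset.Icc N₀ n, (K : ℝ) ≤ (t i : ℝ) := by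
      intro i hi
      rw [Finset.mem_Icc] at hi
      exact_mod_cast hN₀ i (le_trans (le_max_right _ _) hi.1)
    calc ((n + 1 - N₀ : ℕ) : ℝ) * K = (Finset.Icc N₀ n).card • (K : ℝ) := by
          rw [Nat.card_Icc, nsmul_eq_mul]
      _ ≤ ∑ i ∈ Finset.Icc N₀ n, (t i : ℝ) := Finset.card_nsmul_le_sum _ _ _ this
  have hcard : ((n + 1 - N₀ : ℕ) : ℝ) = (n : ℝ) + 1 - N₀ := by
    have : N₀ ≤ n + 1 := by omega
    push_cast [Nat.cast_sub this]
    ring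
  have hhalf : ((n : ℝ) + 1) / 2 ≤ (n : ℝ) + 1 - N₀ := by
    have h1' : N₀ * 2 ≤ n := by omega
    have h1 : (N₀ : ℝ) * 2 ≤ n := by exact_mod_cast h1'
    linarith
  have hSpos : (0:ℝ) < ∑ i ∈ Finset.Icc 1 n, (t i : ℝ) := by
    calc (0:ℝ) < ((n : ℝ) + 1) / 2 * K := by positivity
      _ ≤ ((n : ℝ) + 1 - N₀) * K := by nlinarith
      _ ≤ ∑ i ∈ Finset.Icc 1 n, (t i : ℝ) := by rw [← hcard]; linarith
  have htn1 : (t (n + 1) : ℝ) ≤ (n : ℝ) + 1 := by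
    have := hub (n + 1)
    have h2 : t (n + 1) ≤ n + 1 := by omega
    exact_mod_cast h2
  have hbound : (t (n + 1) : ℝ) / ∑ i ∈ Finset.Icc 1 n, (t i : ℝ) ≤ 2 / K := by
    rw [div_le_div_iff₀ hSpos hKpos]
    have hS2 : ((n : ℝ) + 1) / 2 * K ≤ ∑ i ∈ Finset.Icc 1 n, (t i : ℝ) := by
      calc ((n : ℝ) + 1) / 2 * K ≤ ((n : ℝ) + 1 - N₀) * K := by nlinarith
        _ ≤ ∑ i ∈ Finset.Icc 1 n, (t i : ℝ) := by rw [← hcard]; linarith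
    nlinarith
  have h2K : 2 / (K : ℝ) < ε := by
    rw [div_lt_iff₀ hKpos]
    rw [div_lt_iff₀ hε] at hK
    linarith
  rw [Real.dist_eq, sub_zero, abs_of_nonneg (by positivity)]
  exact lt_of_le_of_lt hbound h2K
end

section
/- Let 1 < λ₀ < λ₁ and let (t_i) be a positive integer sequence with t_i → ∞ and t_{ℓ+1}/T_ℓ → 0 where T_ℓ = ∑_{i=1}^ℓ t_i. Suppose c > 0. Then for all sufficiently large ℓ: λ₁^{(1 + t_{ℓ+1}/T_ℓ)·T_ℓ} · ∏_{i=1}^{ℓ+1} (t_i^{5/2}/c)·(λ₀/λ₁)^{t_i} ≤ λ₂^{T_ℓ} for any fixed λ₂ > λ₁. -/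
open Filter

theorem stmt_19 (l₀ l₁ l₂ c : ℝ) (h0 : 1 < l₀) (h01 : l₀ < l₁) (h12 : l₁ < l₂)
    (hc : 0 < c) (t : ℕ → ℕ) (ht : ∀ i, 0 < t i)
    (htinf : Tendsto (fun i => t i) atTop atTop)
    (hratio : Tendsto
      (fun ℓ => (t (ℓ + 1) : ℝ) / ∑ i ∈ Finset.Icc 1 ℓ, (t i : ℝ))
      atTop (nhds 0)) :
    ∀ᶠ ℓ in atTop,
      l₁ ^ ((1 + (t (ℓ + 1) : ℝ) / ∑ i ∈ Finset.Icc 1 ℓ, (t i : ℝ)) *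
            ∑ i ∈ Finset.Icc 1 ℓ, (t i : ℝ)) *
          ∏ i ∈ Finset.Icc 1 (ℓ + 1),
            ((t i : ℝ) ^ ((5 : ℝ) / 2) / c * (l₀ / l₁) ^ (t i)) ≤
        l₂ ^ (∑ i ∈ Finset.Icc 1 ℓ, (t i : ℝ)) := by
  have hl1 : (1:ℝ) < l₁ := h0.trans h01
  have hl1pos : (0:ℝ) < l₁ := by linarith
  have hl0pos : (0:ℝ) < l₀ := by linarith
  set r : ℝ := l₀ / l₁ with hrdef
  have hrpos : 0 < r := div_pos hl0pos hl1pos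
  have hrlt : r < 1 := (div_lt_one hl1pos).mpr h01
  set f : ℕ → ℝ := fun i => (t i : ℝ) ^ ((5:ℝ)/2) / c * r ^ (t i) with hfdef
  have hfpos : ∀ i, 0 < f i := fun i => by
    have h1 : (0:ℝ) < (t i : ℝ) := by exact_mod_cast ht i
    positivity
  -- eventually f i ≤ 1
  have hg : Tendsto (fun n : ℕ => (n:ℝ)^(3:ℕ) * r ^ n) atTop (nhds 0) :=
    tendsto_pow_const_mul_const_pow_of_lt_one 3 hrpos.le hrlt
  obtain ⟨M, hM⟩ := (hg.eventually (gt_mem_nhds hc)).exists_forall_of_atTop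
  obtain ⟨N, hN⟩ := (htinf.eventually_ge_atTop M).exists_forall_of_atTop
  have hfle : ∀ i ≥ N, f i ≤ 1 := by
    intro i hi
    have h1 : (1:ℝ) ≤ (t i : ℝ) := by exact_mod_cast ht i
    have h52 : (t i : ℝ) ^ ((5:ℝ)/2) ≤ (t i : ℝ) ^ (3:ℕ) := by
      have := Real.rpow_le_rpow_of_exponent_le h1 (by norm_num : (5:ℝ)/2 ≤ 3)
      rwa [show ((3:ℝ)) = ((3:ℕ):ℝ) by norm_num, Real.rpow_natCast] at this
    have hb : (t i : ℝ) ^ (3:ℕ) * r ^ (t i) ≤ c := (hM (t i) (hN i hi)).le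
    have hrp : (0:ℝ) ≤ r ^ (t i) := by positivity
    calc f i = (t i : ℝ) ^ ((5:ℝ)/2) * r ^ (t i) / c := by rw [hfdef]; ring
    _ ≤ (t i : ℝ) ^ (3:ℕ) * r ^ (t i) / c := by gcongr
    _ ≤ c / c := by gcongr
    _ = 1 := div_self hc.ne'
  set C : ℝ := ∏ i ∈ Finset.Icc 1 N, max (f i) 1 with hCdef
  have hC1 : (1:ℝ) ≤ C := by
    calc (1:ℝ) = ∏ i ∈ Finset.Icc 1 N, (1:ℝ) := by simp
    _ ≤ C := Finset.prod_le_prod (fun i _ => zero_le_one) (fun i _ => le_max_right _ _)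
  -- product bound
  have hprod : ∀ ℓ, N ≤ ℓ + 1 → (∏ i ∈ Finset.Icc 1 (ℓ+1), f i) ≤ C := by
    intro ℓ hℓ
    have h1 : (∏ i ∈ Finset.Icc 1 (ℓ+1), f i) ≤ ∏ i ∈ Finset.Icc 1 (ℓ+1), max (f i) 1 :=
      Finset.prod_le_prod (fun i _ => (hfpos i).le) (fun i _ => le_max_left _ _)
    refine h1.trans ?_
    rw [hCdef, (by simpa using Finset.Icc_add_one_left_eq_Ioc 0 N : Finset.Icc 1 N = Finset.Ioc 0 N),
      (by simpa using Finset.Icc_add_one_left_eq_Ioc 0 (ℓ+1) : Finset.Icc 1 (ℓ+1) = Finset.Ioc 0 (ℓ+1)),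
      ← Finset.prod_Ioc_consecutive _ (Nat.zero_le N) hℓ]
    have h2 : (∏ i ∈ Finset.Ioc N (ℓ+1), max (f i) 1) = 1 := by
      apply Finset.prod_eq_one
      intro i hi
      exact max_eq_right (hfle i (Finset.mem_Ioc.mp hi).1.le)
    rw [h2, mul_one]
  set ρ : ℝ := l₂ / l₁ with hρdef
  have hρ : 1 < ρ := (one_lt_div hl1pos).mpr h12
  have hρpos : (0:ℝ) < ρ := by linarith
  set ε : ℝ := Real.log ρ / (2 * Real.log l₁) with hεdef
  have hlogl₁ : 0 < Real.log l₁ := Real.log_pos hl1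
  have hlogρ : 0 < Real.log ρ := Real.log_pos hρ
  have hε : 0 < ε := div_pos hlogρ (by linarith)
  -- eventual conditions
  have hCρ : Tendsto (fun ℓ : ℕ => ρ ^ ((ℓ:ℝ)/2)) atTop atTop := by
    have h1 : Tendsto (fun ℓ : ℕ => Real.log ρ * ((ℓ:ℝ)/2)) atTop atTop := by
      apply Tendsto.const_mul_atTop hlogρ
      exact Tendsto.atTop_div_const (by norm_num) tendsto_natCast_atTop_atTop
    refine (Real.tendsto_exp_atTop.comp h1).congr fun ℓ => ?_
    simp [Real.rpow_def_of_pos hρpos]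
  filter_upwards [hratio.eventually (gt_mem_nhds hε), eventually_ge_atTop 1,
    eventually_ge_atTop N, hCρ.eventually_ge_atTop C] with ℓ hrat hℓ1 hℓN hCle
  set T : ℝ := ∑ i ∈ Finset.Icc 1 ℓ, (t i : ℝ) with hTdef
  have hTℓ : (ℓ:ℝ) ≤ T := by
    calc (ℓ:ℝ) = ∑ i ∈ Finset.Icc 1 ℓ, (1:ℝ) := by
          rw [Finset.sum_const, Nat.card_Icc]; simp
    _ ≤ T := Finset.sum_le_sum fun i _ => by exact_mod_cast ht i
  have hTpos : 0 < T := lt_of_lt_of_le (by exact_mod_cast hℓ1) hTℓ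
  set t' : ℝ := (t (ℓ+1) : ℝ) with ht'def
  have ht'pos : 0 < t' := by rw [ht'def]; exact_mod_cast ht (ℓ+1)
  have ht'T : t' ≤ ε * T := ((div_lt_iff₀ hTpos).mp hrat).le
  -- key: l₁ ^ t' * C ≤ ρ ^ T
  have hhalf : l₁ ^ (ε * T) = ρ ^ (T/2) := by
    rw [Real.rpow_def_of_pos hl1pos, Real.rpow_def_of_pos hρpos]
    congr 1
    rw [hεdef]
    field_simp
  have hkey : l₁ ^ t' * C ≤ ρ ^ T := by
    have h1 : l₁ ^ t' ≤ ρ ^ (T/2) := by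
      rw [← hhalf]
      exact Real.rpow_le_rpow_of_exponent_le hl1.le ht'T
    have h2 : C ≤ ρ ^ (T/2) := by
      refine hCle.trans (Real.rpow_le_rpow_of_exponent_le hρ.le ?_)
      gcongr
    calc l₁ ^ t' * C ≤ ρ ^ (T/2) * ρ ^ (T/2) :=
          mul_le_mul h1 h2 (by linarith) (by positivity)
    _ = ρ ^ (T/2 + T/2) := (Real.rpow_add hρpos _ _).symm
    _ = ρ ^ T := by ring_nf
  -- assemble
  have hexp : (1 + t' / T) * T = T + t' := by field_simp
  have hP : (0:ℝ) ≤ ∏ i ∈ Finset.Icc 1 (ℓ+1), f i :=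
    Finset.prod_nonneg fun i _ => (hfpos i).le
  calc l₁ ^ ((1 + t' / T) * T) * ∏ i ∈ Finset.Icc 1 (ℓ+1), f i
      = l₁ ^ T * (l₁ ^ t' * ∏ i ∈ Finset.Icc 1 (ℓ+1), f i) := by
        rw [hexp, Real.rpow_add hl1pos, mul_assoc]
  _ ≤ l₁ ^ T * (l₁ ^ t' * C) := by
      refine mul_le_mul_of_nonneg_left ?_ (by positivity)
      exact mul_le_mul_of_nonneg_left (hprod ℓ (le_trans hℓN (Nat.le_succ ℓ))) (by positivity)
  _ ≤ l₁ ^ T * ρ ^ T := mul_le_mul_of_nonneg_left hkey (by positivity)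
  _ = l₂ ^ T := by
      rw [← Real.mul_rpow hl1pos.le hρpos.le, hρdef, mul_div_cancel₀ _ hl1pos.ne']
end
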